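/- Let b : ℕ → ℝ satisfy |b(j)| ≤ C(1+ε)^{-j} for some C > 0 and ε > 0, and let a(j) = ∑_{s=0}^{j} ω_{-d,λ}(s) b(j−s) with λ > 0 and d ∈ ℝ − ℤ_{<0}. Then for every ν ∈ [1,2), ∑_{j=0}^∞ |a(j)|^ν < ∞. -/

import Mathlib

open Filter Real Finset

/-- Tempered fractional coefficient ω_{-d,λ}(j) = Γ(j+d)/(Γ(d)Γ(j+1)) e^{-λj}. -/
noncomputable def omegaCoeff (d lam : ℝ) (j : ℕ) : ℝ :=
  Real.Gamma (j + d) / (Real.Gamma d * Real.Gamma (j + 1)) * Real.exp (-lam * j)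

theorem ma_coeff_summable_rpow (b : ℕ → ℝ) (C ε lam d : ℝ)
    (hC : 0 < C) (hε : 0 < ε)
    (hb : ∀ j : ℕ, |b j| ≤ C * (1 + ε) ^ (-(j : ℝ)))
    (hlam : 0 < lam) (hd : ∀ n : ℕ, d ≠ -((n : ℝ) + 1))
    (ν : ℝ) (hν1 : 1 ≤ ν) (hν2 : ν < 2) :
    Summable (fun j : ℕ =>
      |∑ s ∈ Finset.range (j + 1), omegaCoeff d lam s * b (j - s)| ^ ν) := by
  have hν0 : (0:ℝ) < ν := lt_of_lt_of_le one_pos hν1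
  set c : ℕ → ℝ := fun s => Real.Gamma (s + d) / (Real.Gamma d * Real.Gamma (s + 1))
    with hcdef
  set M := |d| with hMdef
  have hM0 : (0:ℝ) ≤ M := abs_nonneg d
  -- ratio bound
  have hratio : ∀ s : ℕ, |c (s+1)| ≤ |c s| * (((s:ℝ) + M) / ((s:ℝ) + 1)) := by
    intro s
    by_cases hd0 : d = 0
    · have hz : ∀ t : ℕ, c t = 0 := by
        intro t; simp [hcdef, hd0, Real.Gamma_zero]
      simp only [hz, abs_zero, zero_mul]
      positivity
    · have hsd : (s:ℝ) + d ≠ 0 := by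
        intro h
        rcases Nat.eq_zero_or_pos s with rfl | hs
        · simp at h; exact hd0 h
        · obtain ⟨n, rfl⟩ := Nat.exists_eq_succ_of_ne_zero hs.ne'
          exact hd n (by push_cast at h ⊢; linarith)
      have h1 : Real.Gamma ((↑(s+1) : ℝ) + d) = ((s:ℝ)+d) * Real.Gamma ((s:ℝ) + d) := by
        push_cast
        rw [add_right_comm, Real.Gamma_add_one hsd]
      have h2 : Real.Gamma ((↑(s+1) : ℝ) + 1) = ((s:ℝ)+1) * Real.Gamma ((s:ℝ) + 1) := by
        push_cast
        rw [Real.Gamma_add_one (by positivity : (s:ℝ) + 1 ≠ 0)]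
      have hGd : Real.Gamma d ≠ 0 := by
        apply Real.Gamma_ne_zero
        intro m
        cases m with
        | zero => simpa using hd0
        | succ n => push_cast; exact hd n
      have hG1 : Real.Gamma ((s:ℝ) + 1) ≠ 0 :=
        (Real.Gamma_pos_of_pos (by positivity)).ne'
      have hkey : c (s+1) = c s * (((s:ℝ)+d) / ((s:ℝ)+1)) := by
        simp only [hcdef]
        rw [h1, h2]
        field_simp
      have habs : |((s:ℝ)+d)/((s:ℝ)+1)| ≤ ((s:ℝ)+M)/((s:ℝ)+1) := by
        rw [abs_div, abs_of_nonneg (show (0:ℝ) ≤ (s:ℝ)+1 by positivity)]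
        gcongr
        calc |(s:ℝ) + d| ≤ |(s:ℝ)| + |d| := abs_add_le _ _
          _ = (s:ℝ) + M := by rw [abs_of_nonneg (Nat.cast_nonneg s)]
      calc |c (s+1)| = |c s| * |((s:ℝ)+d)/((s:ℝ)+1)| := by rw [hkey, abs_mul]
        _ ≤ |c s| * (((s:ℝ)+M)/((s:ℝ)+1)) :=
            mul_le_mul_of_nonneg_left habs (abs_nonneg _)
  set r := Real.exp (lam/2) with hrdef
  have hr1 : 1 < r := by
    rw [hrdef]
    have : (0:ℝ) < lam / 2 := by positivity
    calc (1:ℝ) = Real.exp 0 := (Real.exp_zero).symm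
      _ < Real.exp (lam/2) := Real.exp_lt_exp.mpr this
  obtain ⟨N, hN⟩ := exists_nat_ge (M / (r - 1))
  have hstep : ∀ s : ℕ, N ≤ s → ((s:ℝ) + M) / ((s:ℝ) + 1) ≤ r := by
    intro s hs
    rw [div_le_iff₀ (by positivity : (0:ℝ) < (s:ℝ)+1)]
    have hMr : M ≤ (N:ℝ) * (r - 1) := by
      rw [div_le_iff₀ (by linarith : (0:ℝ) < r - 1)] at hN
      linarith
    have hNs : (N:ℝ) ≤ (s:ℝ) := Nat.cast_le.mpr hs
    nlinarith
  set A := (∑ s ∈ Finset.range (N+1), |c s|) + 1 with hAdef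
  have hA1 : (1:ℝ) ≤ A := by
    have : (0:ℝ) ≤ ∑ s ∈ Finset.range (N+1), |c s| :=
      Finset.sum_nonneg fun _ _ => abs_nonneg _
    linarith
  have hA0 : (0:ℝ) < A := lt_of_lt_of_le one_pos hA1
  have hAc : ∀ s : ℕ, s ≤ N → |c s| ≤ A := by
    intro s hs
    have := Finset.single_le_sum (f := fun t => |c t|)
      (fun t _ => abs_nonneg _) (Finset.mem_range.mpr (Nat.lt_succ_of_le hs))
    linarith
  have hcgrow : ∀ s : ℕ, |c s| ≤ A * r ^ s := by
    intro s
    induction s with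
    | zero => simpa using hAc 0 (Nat.zero_le N)
    | succ t ih =>
      by_cases ht : t + 1 ≤ N
      · calc |c (t+1)| ≤ A := hAc (t+1) ht
          _ ≤ A * r ^ (t+1) :=
            le_mul_of_one_le_right hA0.le (one_le_pow₀ hr1.le)
      · have htN : N ≤ t := by omega
        calc |c (t+1)| ≤ |c t| * (((t:ℝ) + M) / ((t:ℝ) + 1)) := hratio t
          _ ≤ (A * r ^ t) * r := by
              apply mul_le_mul ih (hstep t htN) (by positivity) (by positivity)
          _ = A * r ^ (t+1) := by ring
  set q1 := Real.exp (-(lam/2)) with hq1def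
  set q := max q1 (1/(1+ε)) with hqdef
  have hq0 : (0:ℝ) < q := lt_max_of_lt_left (Real.exp_pos _)
  have hq1 : q < 1 := by
    apply max_lt
    · rw [hq1def]
      calc Real.exp (-(lam/2)) < Real.exp 0 := Real.exp_lt_exp.mpr (by linarith)
        _ = 1 := Real.exp_zero
    · rw [div_lt_one (by linarith)]; linarith
  have hω : ∀ s : ℕ, |omegaCoeff d lam s| ≤ A * q ^ s := by
    intro s
    have hexp : Real.exp (-lam * (s:ℕ)) = (Real.exp (-lam)) ^ s := by
      rw [← Real.exp_nat_mul]; ring_nf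
    have : |omegaCoeff d lam s| = |c s| * Real.exp (-lam * s) := by
      rw [omegaCoeff, abs_mul, abs_of_pos (Real.exp_pos _)]
    rw [this]
    calc |c s| * Real.exp (-lam * s) ≤ (A * r ^ s) * (Real.exp (-lam)) ^ s := by
          rw [hexp] at *
          exact mul_le_mul_of_nonneg_right (hcgrow s) (by positivity)
      _ = A * (r * Real.exp (-lam)) ^ s := by rw [mul_pow]; ring
      _ = A * q1 ^ s := by
          have hrq : r * Real.exp (-lam) = q1 := by
            rw [hrdef, hq1def, ← Real.exp_add]; congr 1; ring
          rw [hrq]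
      _ ≤ A * q ^ s := by
          gcongr
          exact le_max_left _ _
  have hb' : ∀ t : ℕ, |b t| ≤ C * q ^ t := by
    intro t
    have h1 : (1 + ε) ^ (-(t : ℝ)) = (1/(1+ε)) ^ t := by
      rw [Real.rpow_neg (by linarith), Real.rpow_natCast, one_div, inv_pow]
    calc |b t| ≤ C * (1 + ε) ^ (-(t : ℝ)) := hb t
      _ = C * (1/(1+ε)) ^ t := by rw [h1]
      _ ≤ C * q ^ t := by
          gcongr
          exact le_max_right _ _
  have ha : ∀ j : ℕ,
      |∑ s ∈ Finset.range (j + 1), omegaCoeff d lam s * b (j - s)|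
        ≤ A * C * ((j:ℝ) + 1) * q ^ j := by
    intro j
    calc |∑ s ∈ Finset.range (j + 1), omegaCoeff d lam s * b (j - s)|
        ≤ ∑ s ∈ Finset.range (j + 1), |omegaCoeff d lam s * b (j - s)| :=
          Finset.abs_sum_le_sum_abs _ _
      _ ≤ ∑ s ∈ Finset.range (j + 1), A * C * q ^ j := by
          apply Finset.sum_le_sum
          intro s hs
          have hsj : s ≤ j := Nat.lt_succ_iff.mp (Finset.mem_range.mp hs)
          rw [abs_mul]
          calc |omegaCoeff d lam s| * |b (j - s)| ≤ (A * q ^ s) * (C * q ^ (j - s)) := by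
                apply mul_le_mul (hω s) (hb' (j-s)) (abs_nonneg _) (by positivity)
            _ = A * C * (q ^ s * q ^ (j - s)) := by ring
            _ = A * C * q ^ j := by rw [← pow_add, Nat.add_sub_cancel' hsj]
      _ = A * C * ((j:ℝ) + 1) * q ^ j := by
          rw [Finset.sum_const, Finset.card_range, nsmul_eq_mul]
          push_cast; ring
  -- summability of majorant
  have hqν : q ^ ν < 1 := Real.rpow_lt_one hq0.le hq1 hν0
  have hqν0 : (0:ℝ) ≤ q ^ ν := Real.rpow_nonneg hq0.le ν
  have hnorm : ‖q ^ ν‖ < 1 := by rwa [Real.norm_eq_abs, abs_of_nonneg hqν0]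
  have hsum : Summable (fun j : ℕ => ((j:ℝ) + 1) ^ 2 * (q ^ ν) ^ j) := by
    have h2 := summable_pow_mul_geometric_of_norm_lt_one (R := ℝ) 2 hnorm
    have h1 := summable_pow_mul_geometric_of_norm_lt_one (R := ℝ) 1 hnorm
    have h0 : Summable (fun j : ℕ => (q ^ ν) ^ j) :=
      summable_geometric_of_lt_one hqν0 hqν
    have := (h2.add (h1.mul_left 2)).add h0
    apply this.congr
    intro n
    simp only [pow_one]
    ring
  apply Summable.of_nonneg_of_le
    (fun j => Real.rpow_nonneg (abs_nonneg _) ν)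
    ?_ (hsum.mul_left ((A*C)^ν))
  intro j
  have hACj : (0:ℝ) ≤ A * C * ((j:ℝ) + 1) := by positivity
  calc |∑ s ∈ Finset.range (j + 1), omegaCoeff d lam s * b (j - s)| ^ ν
      ≤ (A * C * ((j:ℝ) + 1) * q ^ j) ^ ν :=
        Real.rpow_le_rpow (abs_nonneg _) (ha j) hν0.le
    _ = (A*C) ^ ν * ((j:ℝ)+1) ^ ν * (q ^ j) ^ ν := by
        rw [Real.mul_rpow hACj (by positivity), Real.mul_rpow (by positivity) (by positivity)]
    _ ≤ (A*C) ^ ν * (((j:ℝ)+1) ^ 2 * (q ^ ν) ^ j) := by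
        have hqj : ((q:ℝ) ^ j) ^ ν = (q ^ ν) ^ j := by
          rw [← Real.rpow_natCast q j, ← Real.rpow_mul hq0.le, mul_comm,
            Real.rpow_mul hq0.le, Real.rpow_natCast]
        rw [hqj, ← mul_assoc]
        gcongr
        calc ((j:ℝ)+1) ^ ν ≤ ((j:ℝ)+1) ^ (2:ℝ) :=
              Real.rpow_le_rpow_of_exponent_le (by linarith [Nat.cast_nonneg (α := ℝ) j]) (by linarith)
          _ = ((j:ℝ)+1) ^ (2:ℕ) := by
              rw [← Real.rpow_natCast ((j:ℝ)+1) 2]; norm_num
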